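/- Let J be symmetric 3×3, Ĵ = (1/2)tr(J)I - J, ω ∈ R^3, Ω = ω^×, Π = ĴΩ + ΩĴ, and h > 0. Then Π + (h/2)[Ω,Π] - (h²/4) Ω Π Ω = ( Jω + (h/2)(ω × Jω) + (h²/4)(‖ω‖² Jω + ω × (ω × Jω)) )^×. -/

import Mathlib

open Matrix

def hat (w : Fin 3 → ℝ) : Matrix (Fin 3) (Fin 3) ℝ :=
  !![0, -w 2, w 1; w 2, 0, -w 0; -w 1, w 0, 0]

noncomputable def enorm3 (w : Fin 3 → ℝ) : ℝ := Real.sqrt (w ⬝ᵥ w)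

lemma hat_lie (a b : Fin 3 → ℝ) :
    hat a * hat b - hat b * hat a = hat (a ⨯₃ b) := by
  ext i j
  fin_cases i <;> fin_cases j <;>
    simp [hat, cross_apply, Matrix.mul_apply, Fin.sum_univ_three] <;> ring

lemma hat_sandwich (a b : Fin 3 → ℝ) :
    hat a * hat b * hat a = -hat ((a ⬝ᵥ a) • b + a ⨯₃ (a ⨯₃ b)) := by
  ext i j
  fin_cases i <;> fin_cases j <;>
    simp [hat, cross_apply, Matrix.mul_apply, dotProduct,
      Fin.sum_univ_three] <;> ring

lemma hat_add (a b : Fin 3 → ℝ) : hat (a + b) = hat a + hat b := by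
  ext i j
  fin_cases i <;> fin_cases j <;> simp [hat] <;> ring

lemma hat_smul (c : ℝ) (a : Fin 3 → ℝ) : hat (c • a) = c • hat a := by
  ext i j
  fin_cases i <;> fin_cases j <;> simp [hat] <;> ring

lemma Pi_eq (J : Matrix (Fin 3) (Fin 3) ℝ) (hJ : Jᵀ = J) (ω : Fin 3 → ℝ) :
    ((1 / 2 * J.trace) • 1 - J) * hat ω + hat ω * ((1 / 2 * J.trace) • 1 - J)
      = hat (J.mulVec ω) := by
  have h01 : J 0 1 = J 1 0 := by conv_lhs => rw [← hJ, Matrix.transpose_apply]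
  have h02 : J 0 2 = J 2 0 := by conv_lhs => rw [← hJ, Matrix.transpose_apply]
  have h12 : J 1 2 = J 2 1 := by conv_lhs => rw [← hJ, Matrix.transpose_apply]
  ext i j
  fin_cases i <;> fin_cases j <;>
    simp [hat, Matrix.mul_apply, Matrix.mulVec, Matrix.vecMul, dotProduct,
      Fin.sum_univ_three, Matrix.one_apply, Matrix.trace_fin_three,
      h01, h02, h12] <;> ring

theorem cayley_momentum_vectorization (J : Matrix (Fin 3) (Fin 3) ℝ) (hJ : Jᵀ = J)
    (ω : Fin 3 → ℝ) (h : ℝ) (hh : 0 < h) :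
    let Jhat : Matrix (Fin 3) (Fin 3) ℝ := (1 / 2 * J.trace) • 1 - J
    let Ω := hat ω
    let Pi := Jhat * Ω + Ω * Jhat
    Pi + (h / 2) • (Ω * Pi - Pi * Ω) - (h ^ 2 / 4) • (Ω * Pi * Ω) =
      hat (J.mulVec ω + (h / 2) • (ω ⨯₃ J.mulVec ω)
        + (h ^ 2 / 4) • ((enorm3 ω) ^ 2 • J.mulVec ω + ω ⨯₃ (ω ⨯₃ J.mulVec ω))) := by
  intro Jhat Ω Pi
  have hn : (enorm3 ω) ^ 2 = ω ⬝ᵥ ω := by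
    rw [enorm3, Real.sq_sqrt]
    simp only [dotProduct, Fin.sum_univ_three]
    nlinarith [sq_nonneg (ω 0), sq_nonneg (ω 1), sq_nonneg (ω 2)]
  have hP : Pi = hat (J.mulVec ω) := Pi_eq J hJ ω
  show Pi + (h / 2) • (Ω * Pi - Pi * Ω) - (h ^ 2 / 4) • (Ω * Pi * Ω) = _
  rw [hP]
  show hat (J.mulVec ω) + (h / 2) • (hat ω * hat (J.mulVec ω) - hat (J.mulVec ω) * hat ω)
      - (h ^ 2 / 4) • (hat ω * hat (J.mulVec ω) * hat ω) = _
  rw [hat_lie, hat_sandwich, hn]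
  simp only [hat_add, hat_smul]
  module
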